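/- arXiv:2006.13355 — 2 statements merged into one kernel-verified Lean document; each statement's English description precedes it below -/
import Mathlib

section
/- For any integers d ≥ 2 and Q ≥ 2 with d dividing Q, and any integer a with gcd(a, d) = 1, one has R*_Q(d; a) + R*_Q(d; −a) = 2 · R̄_Q(d), where R*_Q(d; −a) is attached to the residue class of −a modulo d. -/
/-- The least positive residue of `n` modulo `Q`: the unique integer in `[1, Q]`
congruent to `n` mod `Q` (for `Q ≥ 1`). -/
def lpr (Q : ℕ) (n : ℤ) : ℤ := (n - 1) % Q + 1

/-- `R*_Q(d;a) = (1/φ(Q)²) Σ_{s,t=1..Q, gcd(st,Q)=1, s ≡ a (mod d)} ⟨t-s⟩_Q`. -/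
def Rstar (Q d : ℕ) (a : ℤ) : ℚ :=
  (1 / (Nat.totient Q : ℚ) ^ 2) *
    ∑ s ∈ Finset.Icc 1 Q, ∑ t ∈ Finset.Icc 1 Q,
      if Nat.gcd (s * t) Q = 1 ∧ (s : ℤ) ≡ a [ZMOD d] then (lpr Q ((t : ℤ) - (s : ℤ)) : ℚ) else 0

/-- `R̄_Q(d) = (1/φ(d)) (Q/φ(Q)) (φ(Q)+1)/2`. -/
def Rbar (Q d : ℕ) : ℚ :=
  (1 / (Nat.totient d : ℚ)) * ((Q : ℚ) / (Nat.totient Q : ℚ)) * (((Nat.totient Q : ℚ) + 1) / 2)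

open Finset
open scoped Classical

private lemma emod_eq_self (Q : ℕ) (x : ℤ) (h0 : 0 ≤ x) (h1 : x < Q) : x % Q = x :=
  Int.emod_eq_of_lt h0 h1

private lemma emod_eq_add (Q : ℕ) (x : ℤ) (h0 : 0 ≤ x + Q) (h1 : x + Q < Q) : x % Q = x + Q := by
  have : (x + Q * 1) % Q = x % Q := Int.add_mul_emod_self_left ..
  rw [← this]
  simp only [mul_one]
  exact Int.emod_eq_of_lt h0 h1

lemma lpr_add_lpr_neg (Q : ℕ) (hQ : 1 ≤ Q) (m : ℤ) (h1 : -Q < m) (h2 : m < Q) :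
    lpr Q m + lpr Q (-m) = if m = 0 then 2 * Q else Q := by
  unfold lpr
  have hQ' : (0 : ℤ) < Q := by exact_mod_cast hQ
  rcases lt_trichotomy m 0 with hm | hm | hm
  · rw [emod_eq_add Q (m - 1) (by omega) (by omega),
      emod_eq_self Q (-m - 1) (by omega) (by omega)]
    simp only [if_neg (by omega : ¬ m = 0)]; ring
  · subst hm
    rw [if_pos rfl]
    norm_num
    rw [emod_eq_add Q (-1) (by omega) (by omega)]
    ring
  · rw [emod_eq_self Q (m - 1) (by omega) (by omega),
      emod_eq_add Q (-m - 1) (by omega) (by omega)]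
    simp only [if_neg (by omega : ¬ m = 0)]; ring

-- card of elements that are units equals card of the unit group
private lemma card_filter_isUnit (R : Type*) [Monoid R] [Fintype R] [DecidableEq R] :
    (univ.filter (fun x : R => IsUnit x)).card = Fintype.card Rˣ := by
  have h : (univ.filter (fun x : R => IsUnit x)) = univ.map ⟨((↑) : Rˣ → R), Units.val_injective⟩ := by
    ext a
    simp only [mem_filter, mem_univ, true_and, mem_map, Function.Embedding.coeFn_mk]
    exact Iff.rfl
  rw [h, Finset.card_map, Fintype.card]

private lemma count_fiber (d Q : ℕ) [NeZero d] [NeZero Q] (hdQ : d ∣ Q) (c₁ c₂ : ZMod d)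
    (hc₁ : IsUnit c₁) (hc₂ : IsUnit c₂) :
    (univ.filter (fun x : ZMod Q => IsUnit x ∧ ZMod.castHom hdQ (ZMod d) x = c₁)).card =
    (univ.filter (fun x : ZMod Q => IsUnit x ∧ ZMod.castHom hdQ (ZMod d) x = c₂)).card := by
  obtain ⟨b, hb⟩ := ZMod.unitsMap_surjective hdQ (hc₂.unit * hc₁.unit⁻¹)
  have hbc : ZMod.castHom hdQ (ZMod d) (b : ZMod Q) = (hc₂.unit * hc₁.unit⁻¹ : (ZMod d)ˣ) := by
    rw [← hb]; rfl
  apply Finset.card_bij' (fun x _ => (b : ZMod Q) * x) (fun y _ => ((b⁻¹ : (ZMod Q)ˣ) : ZMod Q) * y)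
  · intro x hx
    simp only [mem_filter, mem_univ, true_and] at hx ⊢
    refine ⟨(b.isUnit).mul hx.1, ?_⟩
    rw [map_mul, hbc, hx.2]
    calc ((hc₂.unit * hc₁.unit⁻¹ : (ZMod d)ˣ) : ZMod d) * c₁
        = ((hc₂.unit * hc₁.unit⁻¹ : (ZMod d)ˣ) : ZMod d) * (hc₁.unit : ZMod d) := by
          rw [IsUnit.unit_spec]
      _ = c₂ := by rw [← Units.val_mul, mul_assoc, inv_mul_cancel, mul_one, IsUnit.unit_spec]
  · intro y hy
    simp only [mem_filter, mem_univ, true_and] at hy ⊢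
    refine ⟨(b⁻¹.isUnit).mul hy.1, ?_⟩
    have hbc' : ZMod.castHom hdQ (ZMod d) ((b⁻¹ : (ZMod Q)ˣ) : ZMod Q)
        = ((hc₂.unit * hc₁.unit⁻¹)⁻¹ : (ZMod d)ˣ) := by
      rw [show ((hc₂.unit * hc₁.unit⁻¹)⁻¹ : (ZMod d)ˣ) = ZMod.unitsMap hdQ b⁻¹ by rw [map_inv, hb]]
      rfl
    rw [map_mul, hbc', hy.2]
    calc (((hc₂.unit * hc₁.unit⁻¹)⁻¹ : (ZMod d)ˣ) : ZMod d) * c₂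
        = (((hc₂.unit * hc₁.unit⁻¹)⁻¹ : (ZMod d)ˣ) : ZMod d) * (hc₂.unit : ZMod d) := by
          rw [IsUnit.unit_spec]
      _ = c₁ := by
          rw [← Units.val_mul, mul_inv_rev, inv_inv, mul_assoc, inv_mul_cancel, mul_one,
            IsUnit.unit_spec]
  · intro x _
    rw [← mul_assoc, ← Units.val_mul, inv_mul_cancel, Units.val_one, one_mul]
  · intro y _
    rw [← mul_assoc, ← Units.val_mul, mul_inv_cancel, Units.val_one, one_mul]

lemma count_main (d Q : ℕ) (hd : 2 ≤ d) (hQ : 2 ≤ Q) (hdQ : d ∣ Q) (a : ℤ)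
    (ha : Int.gcd a d = 1) :
    d.totient * ((Finset.Ico 1 Q).filter
      (fun s => Nat.Coprime s Q ∧ (s : ℤ) ≡ a [ZMOD d])).card = Q.totient := by
  haveI : NeZero Q := ⟨by omega⟩
  haveI : NeZero d := ⟨by omega⟩
  haveI : Fact (1 < Q) := ⟨by omega⟩
  set a' : ZMod d := (a : ZMod d) with ha'def
  have ha' : IsUnit a' := by
    have hcop : IsCoprime a (d : ℤ) := Int.isCoprime_iff_gcd_eq_one.mpr ha
    have := hcop.map (Int.castRingHom (ZMod d))
    simp only [map_natCast, ZMod.natCast_self, map_intCast] at this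
    rcases this with ⟨u, v, huv⟩
    simp only [Int.coe_castRingHom, mul_zero, add_zero] at huv
    exact IsUnit.of_mul_eq_one (a := a') u (by rw [ha'def, mul_comm]; exact huv)
  -- bridge
  have hbridge : ((Finset.Ico 1 Q).filter
      (fun s => Nat.Coprime s Q ∧ (s : ℤ) ≡ a [ZMOD d])).card =
      (univ.filter (fun x : ZMod Q => IsUnit x ∧ ZMod.castHom hdQ (ZMod d) x = a')).card := by
    refine Finset.card_nbij (fun s : ℕ => (s : ZMod Q)) ?_ ?_ ?_
    · intro s hs
      simp only [mem_coe, mem_filter, mem_Ico, mem_univ, true_and] at hs ⊢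
      obtain ⟨⟨hs1, hs2⟩, hcop, hc⟩ := hs
      refine ⟨(ZMod.isUnit_iff_coprime s Q).mpr hcop, ?_⟩
      have : (ZMod.castHom hdQ (ZMod d)) ((s : ℕ) : ZMod Q) = ((s : ℕ) : ZMod d) :=
        map_natCast _ s
      rw [this, ha'def, ← Int.cast_natCast, ZMod.intCast_eq_intCast_iff]
      exact hc
    · intro s hs t ht hst
      simp only [mem_coe, mem_filter, mem_Ico] at hs ht
      have := congrArg ZMod.val hst
      rwa [ZMod.val_cast_of_lt hs.1.2, ZMod.val_cast_of_lt ht.1.2] at this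
    · intro x hx
      simp only [mem_coe, mem_filter, mem_univ, true_and] at hx
      obtain ⟨hux, hcx⟩ := hx
      refine ⟨x.val, ?_, ?_⟩
      · simp only [mem_coe, mem_filter, mem_Ico]
        have hv : (x.val : ZMod Q) = x := by rw [ZMod.natCast_val, ZMod.cast_id]
        have hvne : x.val ≠ 0 := by
          rw [Ne, ZMod.val_eq_zero]
          rintro rfl
          exact not_isUnit_zero hux
        have hcop : Nat.Coprime x.val Q := by
          rw [← ZMod.isUnit_iff_coprime, hv]; exact hux
        refine ⟨⟨by omega, x.val_lt⟩, hcop, ?_⟩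
        rw [← ZMod.intCast_eq_intCast_iff, Int.cast_natCast, ← ha'def, ← hcx, ← hv,
            map_natCast, hv]
      · show (x.val : ZMod Q) = x
        rw [ZMod.natCast_val, ZMod.cast_id]
  rw [hbridge]
  -- fiber decomposition
  have htot : Q.totient = ∑ c : ZMod d,
      (univ.filter (fun x : ZMod Q => IsUnit x ∧ ZMod.castHom hdQ (ZMod d) x = c)).card := by
    rw [← ZMod.card_units_eq_totient Q, ← card_filter_isUnit (ZMod Q)]
    rw [Finset.card_eq_sum_card_fiberwise
      (f := fun x => ZMod.castHom hdQ (ZMod d) x) (t := univ) (fun x _ => mem_univ _)]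
    refine Finset.sum_congr rfl fun c _ => ?_
    rw [Finset.filter_filter]
  have hfib : ∀ c : ZMod d,
      (univ.filter (fun x : ZMod Q => IsUnit x ∧ ZMod.castHom hdQ (ZMod d) x = c)).card =
      if IsUnit c then
        (univ.filter (fun x : ZMod Q => IsUnit x ∧ ZMod.castHom hdQ (ZMod d) x = a')).card
      else 0 := by
    intro c
    split_ifs with hc
    · exact count_fiber d Q hdQ c a' hc ha'
    · rw [Finset.card_eq_zero]
      ext x
      simp only [mem_filter, mem_univ, true_and, notMem_empty, iff_false]
      rintro ⟨hux, rfl⟩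
      exact hc (hux.map _)
  rw [htot, Finset.sum_congr rfl fun c _ => hfib c, ← Finset.sum_filter,
    Finset.sum_const, smul_eq_mul, card_filter_isUnit (ZMod d),
    ZMod.card_units_eq_totient]

section mainlemmas
variable (d Q : ℕ) (a : ℤ)

-- shrink a sum over Icc 1 Q to Ico 1 Q when the top term vanishes
private lemma shrink (hQ : 1 ≤ Q) (f : ℕ → ℚ) (hf : f Q = 0) :
    ∑ s ∈ Finset.Icc 1 Q, f s = ∑ s ∈ Finset.Ico 1 Q, f s := by
  rw [← Finset.Ico_add_one_right_eq_Icc, Finset.sum_Ico_succ_top (by omega), hf, add_zero]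

private lemma gcd_top (hQ : 2 ≤ Q) (t : ℕ) : ¬ Nat.gcd (Q * t) Q = 1 := by
  intro h
  have : Q ∣ Nat.gcd (Q * t) Q := Nat.dvd_gcd (Dvd.intro t rfl) dvd_rfl
  rw [h] at this
  have := Nat.le_of_dvd one_pos this
  omega

private lemma shrink2 (hQ : 2 ≤ Q) (b : ℤ) :
    (∑ s ∈ Finset.Icc 1 Q, ∑ t ∈ Finset.Icc 1 Q,
      if Nat.gcd (s * t) Q = 1 ∧ (s : ℤ) ≡ b [ZMOD d] then (lpr Q ((t : ℤ) - (s : ℤ)) : ℚ) else 0)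
    = ∑ s ∈ Finset.Ico 1 Q, ∑ t ∈ Finset.Ico 1 Q,
      if Nat.gcd (s * t) Q = 1 ∧ (s : ℤ) ≡ b [ZMOD d] then (lpr Q ((t : ℤ) - (s : ℤ)) : ℚ) else 0 := by
  rw [shrink Q (by omega) _ (by
    apply Finset.sum_eq_zero
    intro t _
    rw [if_neg]
    rintro ⟨hg, -⟩
    exact gcd_top Q hQ t hg)]
  apply Finset.sum_congr rfl
  intro s _
  apply shrink Q (by omega)
  rw [if_neg]
  rintro ⟨hg, -⟩
  rw [mul_comm] at hg
  exact gcd_top Q hQ s hg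

private lemma cop_reflect (hQ : 2 ≤ Q) {s : ℕ} (h1 : 1 ≤ s) (h2 : s < Q) :
    Nat.Coprime (Q - s) Q ↔ Nat.Coprime s Q := by
  haveI : NeZero Q := ⟨by omega⟩
  rw [← ZMod.isUnit_iff_coprime, ← ZMod.isUnit_iff_coprime]
  have : ((Q - s : ℕ) : ZMod Q) = -(s : ZMod Q) := by
    have := Nat.cast_sub (le_of_lt h2) (R := ZMod Q) (m := s) (n := Q)
    rw [this, ZMod.natCast_self, zero_sub]
  rw [this, IsUnit.neg_iff]

private lemma modeq_reflect (hdQ : d ∣ Q) {s : ℕ} (h2 : s ≤ Q) (b : ℤ) :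
    ((Q - s : ℕ) : ℤ) ≡ -b [ZMOD d] ↔ (s : ℤ) ≡ b [ZMOD d] := by
  have hQ0 : (Q : ℤ) ≡ 0 [ZMOD d] := Int.modEq_zero_iff_dvd.mpr (by exact_mod_cast hdQ)
  rw [Int.natCast_sub h2]
  constructor
  · intro h
    have := hQ0.sub h
    simpa using this.neg
  · intro h
    simpa using hQ0.sub h

private lemma reflect_sum (hd : 2 ≤ d) (hQ : 2 ≤ Q) (hdQ : d ∣ Q) :
    (∑ s ∈ Finset.Ico 1 Q, ∑ t ∈ Finset.Ico 1 Q,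
      if Nat.gcd (s * t) Q = 1 ∧ (s : ℤ) ≡ -a [ZMOD d] then (lpr Q ((t : ℤ) - (s : ℤ)) : ℚ) else 0)
    = ∑ s ∈ Finset.Ico 1 Q, ∑ t ∈ Finset.Ico 1 Q,
      if Nat.gcd (s * t) Q = 1 ∧ (s : ℤ) ≡ a [ZMOD d] then (lpr Q ((s : ℤ) - (t : ℤ)) : ℚ) else 0 := by
  refine Finset.sum_nbij' (i := fun s => Q - s) (j := fun s => Q - s) ?_ ?_ ?_ ?_ ?_
  · intro s hs; simp only [mem_Ico] at hs ⊢; omega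
  · intro s hs; simp only [mem_Ico] at hs ⊢; omega
  · intro s hs; simp only [mem_Ico] at hs; show Q - (Q - s) = s; omega
  · intro s hs; simp only [mem_Ico] at hs; show Q - (Q - s) = s; omega
  · intro s hs
    simp only [mem_Ico] at hs
    refine Finset.sum_nbij' (i := fun t => Q - t) (j := fun t => Q - t) ?_ ?_ ?_ ?_ ?_
    · intro t ht; simp only [mem_Ico] at ht ⊢; omega
    · intro t ht; simp only [mem_Ico] at ht ⊢; omega
    · intro t ht; simp only [mem_Ico] at ht; show Q - (Q - t) = t; omega
    · intro t ht; simp only [mem_Ico] at ht; show Q - (Q - t) = t; omega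
    · intro t ht
      simp only [mem_Ico] at ht
      show (if Nat.gcd (s * t) Q = 1 ∧ (s : ℤ) ≡ -a [ZMOD d]
              then (lpr Q ((t : ℤ) - (s : ℤ)) : ℚ) else 0)
          = (if Nat.gcd ((Q - s) * (Q - t)) Q = 1 ∧ ((Q - s : ℕ) : ℤ) ≡ a [ZMOD d]
              then (lpr Q (((Q - s : ℕ) : ℤ) - ((Q - t : ℕ) : ℤ)) : ℚ) else 0)
      have hcond : (Nat.gcd (s * t) Q = 1 ∧ (s : ℤ) ≡ -a [ZMOD d]) ↔
          (Nat.gcd ((Q - s) * (Q - t)) Q = 1 ∧ ((Q - s : ℕ) : ℤ) ≡ a [ZMOD d]) := by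
        rw [show (Nat.gcd (s * t) Q = 1) = (Nat.Coprime (s * t) Q) from rfl,
          show (Nat.gcd ((Q - s) * (Q - t)) Q = 1) = (Nat.Coprime ((Q - s) * (Q - t)) Q) from rfl,
          Nat.coprime_mul_iff_left, Nat.coprime_mul_iff_left,
          cop_reflect Q hQ hs.1 hs.2, cop_reflect Q hQ ht.1 ht.2,
          show ((((Q - s : ℕ) : ℤ)) ≡ a [ZMOD d]) ↔ ((((Q - s : ℕ) : ℤ)) ≡ -(-a) [ZMOD d]) by
            rw [neg_neg],
          modeq_reflect d Q hdQ (le_of_lt hs.2)]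
      have hval : (lpr Q ((t : ℤ) - (s : ℤ)) : ℚ) =
          (lpr Q (((Q - s : ℕ) : ℤ) - ((Q - t : ℕ) : ℤ)) : ℚ) := by
        congr 2
        rw [Int.natCast_sub (le_of_lt ht.2), Int.natCast_sub (le_of_lt hs.2)]
        ring
      exact if_congr hcond hval rfl

private lemma card_coprime (hQ : 2 ≤ Q) :
    ((Finset.Ico 1 Q).filter (fun t => Nat.Coprime t Q)).card = Q.totient := by
  rw [Nat.totient_eq_card_coprime]
  congr 1
  ext t
  simp only [mem_filter, mem_Ico, mem_range]
  constructor
  · rintro ⟨⟨h1, h2⟩, hc⟩; exact ⟨h2, Nat.coprime_comm.mp hc⟩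
  · rintro ⟨h2, hc⟩
    refine ⟨⟨?_, h2⟩, Nat.coprime_comm.mp hc⟩
    by_contra h
    have ht0 : t = 0 := by omega
    subst ht0
    rw [Nat.coprime_zero_right] at hc
    omega

private lemma hlpr (hQ : 2 ≤ Q) (s t : ℕ) (h1 : 1 ≤ s) (h2 : s < Q) (h3 : 1 ≤ t) (h4 : t < Q) :
    (lpr Q ((t : ℤ) - s) : ℚ) + (lpr Q ((s : ℤ) - t) : ℚ)
      = if s = t then (2 * Q : ℚ) else (Q : ℚ) := by
  have h := lpr_add_lpr_neg Q (by omega) ((t : ℤ) - s) (by push_cast; omega) (by push_cast; omega)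
  have h2' : ((s : ℤ) - t) = -((t : ℤ) - s) := by ring
  rw [h2']
  by_cases hst : s = t
  · rw [if_pos (by omega : (t : ℤ) - s = 0)] at h
    rw [if_pos hst]
    exact_mod_cast h
  · rw [if_neg (by omega : ¬ ((t : ℤ) - s = 0))] at h
    rw [if_neg hst]
    exact_mod_cast h

private lemma innerSumQd (hQ : 2 ≤ Q) (s : ℕ) (hs1 : 1 ≤ s) (hs2 : s < Q) :
    (∑ t ∈ Finset.Ico 1 Q,
      if Nat.gcd (s * t) Q = 1 ∧ (s : ℤ) ≡ a [ZMOD d] then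
        (if s = t then (2 * Q : ℚ) else (Q : ℚ)) else 0)
    = if Nat.Coprime s Q ∧ (s : ℤ) ≡ a [ZMOD d] then ((Q : ℚ) * (Q.totient + 1)) else 0 := by
  by_cases hP : Nat.Coprime s Q ∧ (s : ℤ) ≡ a [ZMOD d]
  · rw [if_pos hP]
    have step : (∑ t ∈ Finset.Ico 1 Q,
        if Nat.gcd (s * t) Q = 1 ∧ (s : ℤ) ≡ a [ZMOD d] then
          (if s = t then (2 * Q : ℚ) else (Q : ℚ)) else 0)
        = ∑ t ∈ Finset.Ico 1 Q,
          ((if Nat.Coprime t Q then (Q : ℚ) else 0) + (if t = s then (Q : ℚ) else 0)) := by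
      apply Finset.sum_congr rfl
      intro t ht
      simp only [mem_Ico] at ht
      by_cases hts : t = s
      · subst hts
        rw [if_pos ⟨Nat.coprime_mul_iff_left.mpr ⟨hP.1, hP.1⟩, hP.2⟩, if_pos rfl, if_pos hP.1,
          if_pos rfl]
        ring
      · by_cases hc : Nat.Coprime t Q
        · rw [if_pos ⟨Nat.coprime_mul_iff_left.mpr ⟨hP.1, hc⟩, hP.2⟩,
            if_neg (fun h => hts h.symm), if_pos hc, if_neg hts, add_zero]
        · rw [if_neg (fun h => hc (Nat.coprime_mul_iff_left.mp h.1).2), if_neg hc,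
            if_neg hts, add_zero]
    rw [step, Finset.sum_add_distrib, ← Finset.sum_filter, Finset.sum_const, card_coprime Q hQ,
      Finset.sum_ite_eq' (Finset.Ico 1 Q) s (fun _ => (Q : ℚ)),
      if_pos (by simp only [mem_Ico]; omega : s ∈ Finset.Ico 1 Q)]
    push_cast
    ring
  · rw [if_neg hP]
    apply Finset.sum_eq_zero
    intro t ht
    rw [if_neg]
    rintro ⟨hg, hc⟩
    exact hP ⟨(Nat.coprime_mul_iff_left.mp hg).1, hc⟩

private lemma main_sum (hQ : 2 ≤ Q) :
    ((∑ s ∈ Finset.Ico 1 Q, ∑ t ∈ Finset.Ico 1 Q,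
      if Nat.gcd (s * t) Q = 1 ∧ (s : ℤ) ≡ a [ZMOD d] then (lpr Q ((t : ℤ) - (s : ℤ)) : ℚ) else 0)
    + ∑ s ∈ Finset.Ico 1 Q, ∑ t ∈ Finset.Ico 1 Q,
      if Nat.gcd (s * t) Q = 1 ∧ (s : ℤ) ≡ a [ZMOD d] then (lpr Q ((s : ℤ) - (t : ℤ)) : ℚ) else 0)
    = ((Q : ℚ) * (Q.totient + 1)) *
        ((Finset.Ico 1 Q).filter (fun s => Nat.Coprime s Q ∧ (s : ℤ) ≡ a [ZMOD d])).card := by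
  rw [← Finset.sum_add_distrib]
  have step : ∀ s ∈ Finset.Ico 1 Q,
      ((∑ t ∈ Finset.Ico 1 Q,
        if Nat.gcd (s * t) Q = 1 ∧ (s : ℤ) ≡ a [ZMOD d] then (lpr Q ((t : ℤ) - (s : ℤ)) : ℚ) else 0)
      + ∑ t ∈ Finset.Ico 1 Q,
        if Nat.gcd (s * t) Q = 1 ∧ (s : ℤ) ≡ a [ZMOD d] then (lpr Q ((s : ℤ) - (t : ℤ)) : ℚ) else 0)
      = if Nat.Coprime s Q ∧ (s : ℤ) ≡ a [ZMOD d] then ((Q : ℚ) * (Q.totient + 1)) else 0 := by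
    intro s hs
    simp only [mem_Ico] at hs
    rw [← Finset.sum_add_distrib, ← innerSumQd d Q a hQ s hs.1 hs.2]
    apply Finset.sum_congr rfl
    intro t ht
    simp only [mem_Ico] at ht
    by_cases hcond : Nat.gcd (s * t) Q = 1 ∧ (s : ℤ) ≡ a [ZMOD d]
    · rw [if_pos hcond, if_pos hcond, if_pos hcond]
      exact hlpr Q hQ s t hs.1 hs.2 ht.1 ht.2
    · rw [if_neg hcond, if_neg hcond, if_neg hcond, add_zero]
  rw [Finset.sum_congr rfl step, ← Finset.sum_filter, Finset.sum_const, nsmul_eq_mul, mul_comm]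

end mainlemmas

/-- `R*_Q(d;a) + R*_Q(d;-a) = 2 R̄_Q(d)`. -/
theorem Rstar_add_Rstar_neg (d Q : ℕ) (hd : 2 ≤ d) (hQ : 2 ≤ Q) (hdQ : d ∣ Q)
    (a : ℤ) (ha : Int.gcd a d = 1) :
    Rstar Q d a + Rstar Q d (-a) = 2 * Rbar Q d := by
  unfold Rstar
  rw [shrink2 d Q hQ a, shrink2 d Q hQ (-a), reflect_sum d Q a hd hQ hdQ, ← mul_add,
    main_sum d Q a hQ]
  have hN : (d.totient : ℚ) * (((Finset.Ico 1 Q).filter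
      (fun s => Nat.Coprime s Q ∧ (s : ℤ) ≡ a [ZMOD d])).card : ℚ) = (Q.totient : ℚ) := by
    exact_mod_cast congrArg (Nat.cast : ℕ → ℚ) (count_main d Q hd hQ hdQ a ha)
  have hφQ : (Q.totient : ℚ) ≠ 0 := by
    exact_mod_cast (Nat.totient_pos.mpr (by omega : 0 < Q)).ne'
  have hφd : (d.totient : ℚ) ≠ 0 := by
    exact_mod_cast (Nat.totient_pos.mpr (by omega : 0 < d)).ne'
  have hN' : ((((Finset.Ico 1 Q).filter
      (fun s => Nat.Coprime s Q ∧ (s : ℤ) ≡ a [ZMOD d])).card : ℕ) : ℚ)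
      = (Q.totient : ℚ) / (d.totient : ℚ) := by
    rw [eq_div_iff hφd]
    linear_combination hN
  rw [hN']
  unfold Rbar
  field_simp
end

section
/- Let d ≥ 2 and Q ≥ 2 be integers with d dividing Q, and let a be an integer with gcd(a, d) = 1. Writing d_sf = rad(d) for the radical of d, if d_sf ≥ 2 then R_Q(d; a) = (φ(d_sf)/φ(d)) · R_Q(d_sf; a). -/
/-- The bias constant `R_Q(d;a) = R*_Q(d;a) - R̄_Q(d)`. -/
def Rbias (Q d : ℕ) (a : ℤ) : ℚ := Rstar Q d a - Rbar Q d

/-- The radical (maximal square-free divisor) `rad(d) = ∏_{p ∣ d, p prime} p`. -/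
def radical (d : ℕ) : ℕ := ∏ p ∈ d.primeFactors, p

section helpers

open Finset

lemma radical_dvd (n : ℕ) : radical n ∣ n := Nat.prod_primeFactors_dvd n

lemma radical_ne_zero (n : ℕ) : radical n ≠ 0 :=
  Finset.prod_ne_zero_iff.mpr fun p hp => (Nat.prime_of_mem_primeFactors hp).ne_zero

lemma prime_dvd_radical_iff {n p : ℕ} (hn : n ≠ 0) (hp : p.Prime) :
    p ∣ radical n ↔ p ∣ n := by
  constructor
  · exact fun h => h.trans (radical_dvd n)
  · intro h
    exact Finset.dvd_prod_of_mem _ (Nat.mem_primeFactors.mpr ⟨hp, h, hn⟩)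

lemma coprime_radical_iff {n m : ℕ} (hn : n ≠ 0) :
    m.Coprime (radical n) ↔ m.Coprime n := by
  rw [← not_iff_not, Nat.Prime.not_coprime_iff_dvd, Nat.Prime.not_coprime_iff_dvd]
  constructor
  · rintro ⟨p, hp, hpm, hpr⟩
    exact ⟨p, hp, hpm, hpr.trans (radical_dvd n)⟩
  · rintro ⟨p, hp, hpm, hpn⟩
    exact ⟨p, hp, hpm, (prime_dvd_radical_iff hn hp).mpr hpn⟩

lemma lpr_congr {Q : ℕ} {m n : ℤ} (h : m ≡ n [ZMOD Q]) : lpr Q m = lpr Q n := by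
  unfold lpr
  rw [Int.ModEq.sub_right 1 h]

/-- `lpr` as a function on `ZMod Q`. -/
def LQ {Q : ℕ} [NeZero Q] (x : ZMod Q) : ℚ := (lpr Q (x.val) : ℚ)

lemma lpr_cast {Q : ℕ} [NeZero Q] (n : ℤ) : (lpr Q n : ℚ) = LQ (n : ZMod Q) := by
  unfold LQ
  congr 1
  apply lpr_congr
  rw [← ZMod.intCast_eq_intCast_iff]
  push_cast
  exact (ZMod.natCast_rightInverse (n : ZMod Q)).symm

lemma sum_Icc_zmod {Q : ℕ} [NeZero Q] (f : ZMod Q → ℚ) :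
    ∑ s ∈ Finset.Icc 1 Q, f (s : ZMod Q) = ∑ x : ZMod Q, f x := by
  have hQ1 : 1 ≤ Q := Nat.one_le_iff_ne_zero.mpr (NeZero.ne Q)
  apply Finset.sum_nbij' (i := fun s : ℕ => (s : ZMod Q))
    (j := fun x : ZMod Q => if x.val = 0 then Q else x.val)
  · intro s _; exact Finset.mem_univ _
  · intro x _
    by_cases h : x.val = 0
    · simp [h, Finset.mem_Icc, hQ1]
    · have := ZMod.val_lt x
      simp only [h, if_false, Finset.mem_Icc]
      omega
  · intro s hs
    simp only [Finset.mem_Icc] at hs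
    have hv : (s : ZMod Q).val = s % Q := ZMod.val_natCast Q s
    rcases eq_or_lt_of_le hs.2 with h | h
    · subst h
      simp [hv, Nat.mod_self]
    · rw [hv, Nat.mod_eq_of_lt h]
      have : s ≠ 0 := by omega
      simp [this]
  · intro x _
    by_cases h : x.val = 0
    · simp only [h, if_pos]
      rw [ZMod.natCast_self]
      exact ((ZMod.val_eq_zero x).mp h).symm
    · simp only [h, if_neg, if_false]
      exact ZMod.natCast_rightInverse x
  · intro s _; rfl

/-- Inner sum as a function of the residue of `s`. -/
def Fs {Q : ℕ} [NeZero Q] (s : ZMod Q) : ℚ :=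
  ∑ t : ZMod Q, if IsUnit t then LQ (t - s) else 0

lemma Rstar_eq (Q e : ℕ) [NeZero Q] (he : e ∣ Q) (a : ℤ) :
    Rstar Q e a = (1 / (Nat.totient Q : ℚ) ^ 2) * ∑ s : ZMod Q,
      if IsUnit s ∧ ZMod.castHom he (ZMod e) s = (a : ZMod e) then Fs s else 0 := by
  unfold Rstar
  congr 1
  rw [← sum_Icc_zmod (f := fun s : ZMod Q =>
    if IsUnit s ∧ ZMod.castHom he (ZMod e) s = (a : ZMod e) then Fs s else 0)]
  refine Finset.sum_congr rfl fun s _ => ?_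
  have hstep : ∀ t : ℕ,
      (if Nat.gcd (s * t) Q = 1 ∧ (s : ℤ) ≡ a [ZMOD e] then (lpr Q ((t : ℤ) - (s : ℤ)) : ℚ) else 0)
      = (fun T : ZMod Q => if (IsUnit (s : ZMod Q) ∧ IsUnit T) ∧
          ZMod.castHom he (ZMod e) (s : ZMod Q) = (a : ZMod e)
          then LQ (T - (s : ZMod Q)) else 0) (t : ZMod Q) := by
    intro t
    have h1 : Nat.gcd (s * t) Q = 1 ↔ IsUnit ((s : ℕ) : ZMod Q) ∧ IsUnit ((t : ℕ) : ZMod Q) := by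
      rw [ZMod.isUnit_iff_coprime, ZMod.isUnit_iff_coprime]
      exact Nat.coprime_mul_iff_left
    have h2 : ((s : ℤ) ≡ a [ZMOD e]) ↔
        ZMod.castHom he (ZMod e) ((s : ℕ) : ZMod Q) = (a : ZMod e) := by
      rw [map_natCast, ← ZMod.intCast_eq_intCast_iff]
      push_cast
      rfl
    have h3 : (lpr Q ((t : ℤ) - (s : ℤ)) : ℚ) = LQ (((t : ℕ) : ZMod Q) - ((s : ℕ) : ZMod Q)) := by
      rw [lpr_cast]
      congr 1
      push_cast
      ring
    simp only [h1, h2, h3]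
  rw [Finset.sum_congr rfl fun t _ => hstep t,
    sum_Icc_zmod (f := fun T : ZMod Q => if (IsUnit (s : ZMod Q) ∧ IsUnit T) ∧
      ZMod.castHom he (ZMod e) (s : ZMod Q) = (a : ZMod e) then LQ (T - (s : ZMod Q)) else 0)]
  by_cases h : IsUnit (s : ZMod Q) ∧ ZMod.castHom he (ZMod e) (s : ZMod Q) = (a : ZMod e)
  · rw [if_pos h]
    unfold Fs
    refine Finset.sum_congr rfl fun T _ => ?_
    by_cases hT : IsUnit T
    · rw [if_pos ⟨⟨h.1, hT⟩, h.2⟩, if_pos hT]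
    · rw [if_neg (fun hc => hT hc.1.2), if_neg hT]
  · rw [if_neg h]
    refine Finset.sum_eq_zero fun T _ => ?_
    rw [if_neg (fun hc => h ⟨hc.1.1, hc.2⟩)]

lemma isUnit_iff_rad {Q : ℕ} [NeZero Q] (x : ZMod Q) :
    IsUnit x ↔ IsUnit (ZMod.castHom (radical_dvd Q) (ZMod (radical Q)) x) := by
  haveI : NeZero (radical Q) := ⟨radical_ne_zero Q⟩
  have hx : ((x.val : ℕ) : ZMod Q) = x := ZMod.natCast_rightInverse x
  rw [← hx, map_natCast, ZMod.isUnit_iff_coprime, ZMod.isUnit_iff_coprime,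
    coprime_radical_iff (NeZero.ne Q)]

lemma Fs_shift {Q : ℕ} [NeZero Q] (s δ : ZMod Q)
    (hδ : ZMod.castHom (radical_dvd Q) (ZMod (radical Q)) δ = 0) :
    Fs (s + δ) = Fs s := by
  unfold Fs
  refine (Fintype.sum_equiv (Equiv.addRight δ)
    (fun t => if IsUnit t then LQ (t - s) else 0)
    (fun t => if IsUnit t then LQ (t - (s + δ)) else 0) fun t => ?_).symm
  have hu : IsUnit (t + δ) ↔ IsUnit t := by
    rw [isUnit_iff_rad (t + δ), isUnit_iff_rad t, map_add, hδ, add_zero]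
  have hv : (t + δ) - (s + δ) = t - s := by ring
  simp only [Equiv.coe_addRight, hv, hu]


lemma exists_delta {d Q : ℕ} [NeZero Q] (hd0 : d ≠ 0) (hdQ : d ∣ Q) (c : ZMod d)
    (hc : ZMod.castHom (radical_dvd d) (ZMod (radical d)) c = 0) :
    ∃ δ : ZMod Q, ZMod.castHom hdQ (ZMod d) δ = c ∧
      ZMod.castHom (radical_dvd Q) (ZMod (radical Q)) δ = 0 := by
  haveI : NeZero d := ⟨hd0⟩
  have hQ0 : Q ≠ 0 := NeZero.ne Q
  set m := ∏ p ∈ Q.primeFactors \ d.primeFactors, p with hm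
  have hco : Nat.Coprime d m := by
    by_contra h
    obtain ⟨p, hp, hpd, hpm⟩ := Nat.Prime.not_coprime_iff_dvd.mp h
    obtain ⟨q, hq, hpq⟩ := hp.prime.exists_mem_finset_dvd hpm
    have hq' : q.Prime := Nat.prime_of_mem_primeFactors (Finset.mem_sdiff.mp hq).1
    have hpq' : p = q := (Nat.prime_dvd_prime_iff_eq hp hq').mp hpq
    subst hpq'
    exact (Finset.mem_sdiff.mp hq).2 (Nat.mem_primeFactors.mpr ⟨hp, hpd, hd0⟩)
  obtain ⟨k, hk1, hk2⟩ := Nat.chineseRemainder hco c.val 0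
  refine ⟨(k : ZMod Q), ?_, ?_⟩
  · rw [map_natCast,
      show ((k : ℕ) : ZMod d) = ((c.val : ℕ) : ZMod d) from
        (ZMod.natCast_eq_natCast_iff _ _ _).mpr hk1]
    exact ZMod.natCast_rightInverse c
  · rw [map_natCast, ZMod.natCast_eq_zero_iff]
    have hsub : d.primeFactors ⊆ Q.primeFactors := Nat.primeFactors_mono hdQ hQ0
    have hradQ : radical Q = m * radical d := by
      unfold radical
      rw [Finset.prod_sdiff hsub]
    have hrdc : radical d ∣ c.val := by
      have h1 : ZMod.castHom (radical_dvd d) (ZMod (radical d)) ((c.val : ℕ) : ZMod d)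
          = ((c.val : ℕ) : ZMod (radical d)) := map_natCast _ _
      rw [ZMod.natCast_rightInverse c, hc] at h1
      exact (ZMod.natCast_eq_zero_iff _ _).mp h1.symm
    have hdk : k ≡ c.val [MOD radical d] := Nat.ModEq.of_dvd (radical_dvd d) hk1
    have hrdk : radical d ∣ k :=
      Nat.modEq_zero_iff_dvd.mp (hdk.trans (Nat.modEq_zero_iff_dvd.mpr hrdc))
    have hmk : m ∣ k := Nat.modEq_zero_iff_dvd.mp hk2
    have hcord : Nat.Coprime m (radical d) :=
      (Nat.Coprime.coprime_dvd_left (radical_dvd d) hco).symm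
    rw [hradQ]
    exact Nat.Coprime.mul_dvd_of_dvd_of_dvd hcord hmk hrdk

lemma totient_eq_card_fiber (d : ℕ) [NeZero d] (a : ℤ)
    (hu : IsUnit ((a : ZMod d))) :
    Nat.totient d = Nat.totient (radical d) *
      (Finset.univ.filter fun b : ZMod d => IsUnit b ∧
        ZMod.castHom (radical_dvd d) (ZMod (radical d)) b = (a : ZMod (radical d))).card := by
  haveI : NeZero (radical d) := ⟨radical_ne_zero d⟩
  set rd := radical d with hrd
  set f := ZMod.unitsMap (radical_dvd d) with hf
  have hsurj : Function.Surjective f := ZMod.unitsMap_surjective (radical_dvd d)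
  have huaa : IsUnit ((a : ZMod rd)) := by
    have h := hu.map (ZMod.castHom (radical_dvd d) (ZMod rd))
    rwa [map_intCast] at h
  set ua := huaa.unit with hua
  have hcoe : ∀ v : (ZMod d)ˣ,
      ((f v : (ZMod rd)ˣ) : ZMod rd) = ZMod.castHom (radical_dvd d) (ZMod rd) (v : ZMod d) :=
    fun v => rfl
  have h1 : (Finset.univ.filter fun b : ZMod d => IsUnit b ∧
        ZMod.castHom (radical_dvd d) (ZMod rd) b = (a : ZMod rd)).card
      = (Finset.univ.filter fun v : (ZMod d)ˣ => f v = ua).card := by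
    apply Finset.card_bij (fun b hb => ((Finset.mem_filter.mp hb).2.1).unit)
    · intro b hb
      obtain ⟨-, hub, hcb⟩ := Finset.mem_filter.mp hb
      simp only [Finset.mem_filter, Finset.mem_univ, true_and]
      apply Units.ext
      rw [hcoe, IsUnit.unit_spec, hcb, hua, IsUnit.unit_spec]
    · intro b hb b' hb' h
      have := congrArg (fun v : (ZMod d)ˣ => (v : ZMod d)) h
      simpa only [IsUnit.unit_spec] using this
    · intro v hv
      obtain ⟨-, hfv⟩ := Finset.mem_filter.mp hv
      refine ⟨(v : ZMod d), Finset.mem_filter.mpr ⟨Finset.mem_univ _, v.isUnit, ?_⟩, ?_⟩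
      · rw [← hcoe, hfv, hua, IsUnit.unit_spec]
      · apply Units.ext
        simp only [IsUnit.unit_spec]
  obtain ⟨b₀, hb₀⟩ := hsurj ua
  have h2 : (Finset.univ.filter fun v : (ZMod d)ˣ => f v = ua).card
      = (Finset.univ.filter fun v : (ZMod d)ˣ => f v = 1).card := by
    apply Finset.card_bij (fun v _ => b₀⁻¹ * v)
    · intro v hv
      obtain ⟨-, hfv⟩ := Finset.mem_filter.mp hv
      simp only [Finset.mem_filter, Finset.mem_univ, true_and, map_mul, map_inv, hfv, hb₀,
        inv_mul_cancel]
    · intro v _ v' _ h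
      exact mul_left_cancel h
    · intro w hw
      obtain ⟨-, hfw⟩ := Finset.mem_filter.mp hw
      refine ⟨b₀ * w, Finset.mem_filter.mpr ⟨Finset.mem_univ _, ?_⟩, ?_⟩
      · rw [map_mul, hfw, hb₀, mul_one]
      · rw [inv_mul_cancel_left]
  have h3 : (Finset.univ.filter fun v : (ZMod d)ˣ => f v = 1).card = Nat.card f.ker := by
    have he : Nat.card f.ker = Nat.card {v : (ZMod d)ˣ // f v = 1} :=
      Nat.card_congr (Equiv.subtypeEquivRight fun v => f.mem_ker)
    rw [he, Nat.card_eq_fintype_card, Fintype.card_subtype]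
  have h4 : Nat.card (ZMod d)ˣ = Nat.card (ZMod rd)ˣ * Nat.card f.ker := by
    rw [Subgroup.card_eq_card_quotient_mul_card_subgroup f.ker]
    congr 1
    exact Nat.card_congr (QuotientGroup.quotientKerEquivOfSurjective f hsurj).toEquiv
  have h5 : Nat.card (ZMod d)ˣ = d.totient := by
    rw [Nat.card_eq_fintype_card, ZMod.card_units_eq_totient]
  have h6 : Nat.card (ZMod rd)ˣ = rd.totient := by
    rw [Nat.card_eq_fintype_card, ZMod.card_units_eq_totient]
  rw [← h5, h4, h6, h1, h2, h3]


end helpers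

/-- `R_Q(d;a) = (φ(rad d)/φ(d)) · R_Q(rad d; a)`. -/
theorem bias_radical_equiv (d Q : ℕ) (hd : 2 ≤ d) (hQ : 2 ≤ Q) (hdQ : d ∣ Q)
    (a : ℤ) (ha : Int.gcd a d = 1) (hsf : 2 ≤ radical d) :
    Rbias Q d a = ((Nat.totient (radical d) : ℚ) / (Nat.totient d : ℚ)) *
      Rbias Q (radical d) a := by
  haveI : NeZero Q := ⟨by omega⟩
  haveI : NeZero d := ⟨by omega⟩
  haveI : NeZero (radical d) := ⟨radical_ne_zero d⟩
  have hrdQ : radical d ∣ Q := (radical_dvd d).trans hdQ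
  -- `a` is a unit mod `d` and mod `radical d`
  have hua : IsUnit ((a : ZMod d)) := by
    obtain ⟨u, v, huv⟩ := Int.isCoprime_iff_gcd_eq_one.mpr ha
    have h1 : (u : ZMod d) * (a : ZMod d) + (v : ZMod d) * ((d : ℕ) : ZMod d) = 1 := by
      have h2 := congrArg (fun z : ℤ => (z : ZMod d)) huv
      push_cast at h2
      exact_mod_cast h2
    rw [ZMod.natCast_self, mul_zero, add_zero] at h1
    exact IsUnit.of_mul_eq_one _ (mul_comm (u : ZMod d) (a : ZMod d) ▸ h1)
  -- composition of cast maps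
  have hcomp : ∀ s : ZMod Q, ZMod.castHom hrdQ (ZMod (radical d)) s
      = ZMod.castHom (radical_dvd d) (ZMod (radical d)) (ZMod.castHom hdQ (ZMod d) s) := by
    intro s
    rw [← RingHom.comp_apply, ZMod.castHom_comp]
  -- shifting a residue class of `d` inside the fiber over `a mod radical d`
  have shift : ∀ b : ZMod d, IsUnit b →
      ZMod.castHom (radical_dvd d) (ZMod (radical d)) b = (a : ZMod (radical d)) →
      (∑ s : ZMod Q, if ZMod.castHom hdQ (ZMod d) s = b ∧ IsUnit s then Fs s else 0)
      = ∑ s : ZMod Q,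
          if ZMod.castHom hdQ (ZMod d) s = (a : ZMod d) ∧ IsUnit s then Fs s else 0 := by
    intro b hb hbrd
    have hc0 : ZMod.castHom (radical_dvd d) (ZMod (radical d)) (b - (a : ZMod d)) = 0 := by
      rw [map_sub, hbrd, map_intCast, sub_self]
    obtain ⟨δ, hδ1, hδ2⟩ := exists_delta (NeZero.ne d) hdQ (b - (a : ZMod d)) hc0
    refine (Fintype.sum_equiv (Equiv.addRight δ)
      (fun s => if ZMod.castHom hdQ (ZMod d) s = (a : ZMod d) ∧ IsUnit s then Fs s else 0)
      (fun s => if ZMod.castHom hdQ (ZMod d) s = b ∧ IsUnit s then Fs s else 0)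
      fun s => ?_).symm
    have h1 : ZMod.castHom hdQ (ZMod d) (s + δ)
        = ZMod.castHom hdQ (ZMod d) s + (b - (a : ZMod d)) := by
      rw [map_add, hδ1]
    have h2 : ZMod.castHom hdQ (ZMod d) s + (b - (a : ZMod d)) = b
        ↔ ZMod.castHom hdQ (ZMod d) s = (a : ZMod d) := by
      constructor <;> intro h <;> linear_combination h
    have h3 : IsUnit (s + δ) ↔ IsUnit s := by
      rw [isUnit_iff_rad (s + δ), isUnit_iff_rad s, map_add, hδ2, add_zero]
    have h4 : Fs (s + δ) = Fs s := Fs_shift s δ hδ2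
    simp only [Equiv.coe_addRight, h1, h2, h3, h4]
  -- evaluating the inner (fiberwise) sums
  have inner : ∀ b : ZMod d,
      (∑ s ∈ Finset.univ.filter (fun s : ZMod Q => ZMod.castHom hdQ (ZMod d) s = b),
        if IsUnit s ∧ ZMod.castHom hrdQ (ZMod (radical d)) s = (a : ZMod (radical d))
        then Fs s else 0)
      = if IsUnit b ∧
          ZMod.castHom (radical_dvd d) (ZMod (radical d)) b = (a : ZMod (radical d))
        then (∑ s : ZMod Q,
          if ZMod.castHom hdQ (ZMod d) s = b ∧ IsUnit s then Fs s else 0) else 0 := by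
    intro b
    by_cases hb : IsUnit b ∧
        ZMod.castHom (radical_dvd d) (ZMod (radical d)) b = (a : ZMod (radical d))
    · rw [if_pos hb, Finset.sum_filter]
      refine Finset.sum_congr rfl fun s _ => ?_
      by_cases h1 : ZMod.castHom hdQ (ZMod d) s = b
      · by_cases h2 : IsUnit s
        · rw [if_pos h1, if_pos ⟨h2, by rw [hcomp, h1, hb.2]⟩, if_pos ⟨h1, h2⟩]
        · rw [if_pos h1, if_neg (fun hc => h2 hc.1), if_neg (fun hc => h2 hc.2)]
      · rw [if_neg h1, if_neg (fun hc => h1 hc.1)]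
    · rw [if_neg hb]
      refine Finset.sum_eq_zero fun s hs => ?_
      have hsb : ZMod.castHom hdQ (ZMod d) s = b := (Finset.mem_filter.mp hs).2
      rw [if_neg]
      rintro ⟨h2, h3⟩
      exact hb ⟨hsb ▸ (h2.map (ZMod.castHom hdQ (ZMod d))), by rw [← hsb, ← hcomp, h3]⟩
  -- the fiber count
  have hcount : d.totient = (radical d).totient *
      (Finset.univ.filter fun b : ZMod d => IsUnit b ∧
        ZMod.castHom (radical_dvd d) (ZMod (radical d)) b = (a : ZMod (radical d))).card :=
    totient_eq_card_fiber d a hua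
  set N := (Finset.univ.filter fun b : ZMod d => IsUnit b ∧
      ZMod.castHom (radical_dvd d) (ZMod (radical d)) b = (a : ZMod (radical d))).card with hN
  -- the key identity between the two character sums
  have key : (∑ s : ZMod Q,
        if IsUnit s ∧ ZMod.castHom hrdQ (ZMod (radical d)) s = (a : ZMod (radical d))
        then Fs s else 0)
      = (N : ℚ) * ∑ s : ZMod Q,
        if IsUnit s ∧ ZMod.castHom hdQ (ZMod d) s = (a : ZMod d) then Fs s else 0 := by
    rw [← Finset.sum_fiberwise Finset.univ (fun s : ZMod Q => ZMod.castHom hdQ (ZMod d) s)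
      (fun s => if IsUnit s ∧
        ZMod.castHom hrdQ (ZMod (radical d)) s = (a : ZMod (radical d)) then Fs s else 0)]
    rw [Finset.sum_congr rfl fun b _ => inner b]
    have hswap : ∀ b : ZMod d, (if IsUnit b ∧
          ZMod.castHom (radical_dvd d) (ZMod (radical d)) b = (a : ZMod (radical d))
        then (∑ s : ZMod Q,
          if ZMod.castHom hdQ (ZMod d) s = b ∧ IsUnit s then Fs s else 0) else 0)
        = (if IsUnit b ∧
          ZMod.castHom (radical_dvd d) (ZMod (radical d)) b = (a : ZMod (radical d))
        then (∑ s : ZMod Q,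
          if ZMod.castHom hdQ (ZMod d) s = (a : ZMod d) ∧ IsUnit s then Fs s else 0) else 0) := by
      intro b
      by_cases hb : IsUnit b ∧
          ZMod.castHom (radical_dvd d) (ZMod (radical d)) b = (a : ZMod (radical d))
      · rw [if_pos hb, if_pos hb, shift b hb.1 hb.2]
      · rw [if_neg hb, if_neg hb]
    rw [Finset.sum_congr rfl fun b _ => hswap b, ← Finset.sum_filter, Finset.sum_const, ← hN,
      nsmul_eq_mul]
    congr 1
    refine Finset.sum_congr rfl fun s _ => ?_
    by_cases h1 : ZMod.castHom hdQ (ZMod d) s = (a : ZMod d) <;> by_cases h2 : IsUnit s <;>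
      simp [h1, h2]
  -- numerical bookkeeping
  have hφQ : (Q.totient : ℚ) ≠ 0 :=
    Nat.cast_ne_zero.mpr (Nat.totient_pos.mpr (by omega)).ne'
  have hφd : (d.totient : ℚ) ≠ 0 :=
    Nat.cast_ne_zero.mpr (Nat.totient_pos.mpr (by omega)).ne'
  have hφrd : ((radical d).totient : ℚ) ≠ 0 :=
    Nat.cast_ne_zero.mpr (Nat.totient_pos.mpr (by omega)).ne'
  have hN0 : (N : ℚ) ≠ 0 := by
    have : N ≠ 0 := by
      intro h
      rw [h, mul_zero] at hcount
      exact absurd hcount (Nat.totient_pos.mpr (by omega : 0 < d)).ne'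
    exact_mod_cast this
  have hNd : (d.totient : ℚ) = ((radical d).totient : ℚ) * N := by exact_mod_cast hcount
  unfold Rbias Rbar
  rw [Rstar_eq Q d hdQ a, Rstar_eq Q (radical d) hrdQ a, key, hNd]
  field_simp
end
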